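/- Let M : [0,∞) → [0,1] be integrable with M(s) ≤ 1 and define I(s) = (1/2)∫₀^s M(u)du. Suppose I(s) ≤ H for all s > 0, where H > 0. If for every t ∈ (0,1), M(2H·t) → 1 along a family indexed by ε → 0 (with H = H_ε possibly depending on ε), then I(2H_ε·t)/H_ε → min(t,1) for every t > 0 as ε → 0. -/

import Mathlib

open MeasureTheory Filter

theorem normalized_MI_tendsto_min
    (M : ℝ → ℝ → ℝ) (H : ℝ → ℝ) (I : ℝ → ℝ → ℝ)
    (hmeas : ∀ ε, 0 < ε → Measurable (M ε))
    (hH : ∀ ε, 0 < ε → 0 < H ε)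
    (hM01 : ∀ ε, 0 < ε → ∀ s, 0 ≤ s → M ε s ∈ Set.Icc (0:ℝ) 1)
    (hI : ∀ ε, 0 < ε → ∀ s, I ε s = (1 / 2) * ∫ u in (0:ℝ)..s, M ε u)
    (hIH : ∀ ε, 0 < ε → ∀ s, 0 < s → I ε s ≤ H ε)
    (hstep : ∀ t ∈ Set.Ioo (0:ℝ) 1,
      Tendsto (fun ε => M ε (2 * H ε * t)) (nhdsWithin 0 (Set.Ioi (0:ℝ))) (nhds 1)) :
    ∀ t, 0 < t →
      Tendsto (fun ε => I ε (2 * H ε * t) / H ε)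
        (nhdsWithin 0 (Set.Ioi (0:ℝ))) (nhds (min t 1)) := by
  set l := nhdsWithin (0:ℝ) (Set.Ioi 0) with hl
  have hev : ∀ᶠ ε in l, ε ∈ Set.Ioi (0:ℝ) := eventually_mem_nhdsWithin
  -- integrability of the rescaled M
  have hint : ∀ ε, 0 < ε → ∀ t : ℝ, 0 < t →
      IntervalIntegrable (fun τ => M ε (2 * H ε * τ)) volume 0 t := by
    intro ε hε t ht
    have hHε := hH ε hε
    rw [intervalIntegrable_iff]
    refine Integrable.mono' (g := fun _ => (1:ℝ))
      ((integrableOn_const_iff).mpr (Or.inr (by rw [Set.uIoc_of_le ht.le]; exact measure_Ioc_lt_top)))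
      (((hmeas ε hε).comp (measurable_const_mul _)).aestronglyMeasurable) ?_
    refine ae_restrict_of_forall_mem measurableSet_uIoc ?_
    intro x hx
    have hx0 : 0 ≤ x := by
      rw [Set.uIoc_of_le ht.le] at hx
      exact hx.1.le
    have h2 : (0:ℝ) ≤ 2 * H ε * x :=
      mul_nonneg (by positivity) hx0
    have := hM01 ε hε _ h2
    simp only [Real.norm_eq_abs, abs_le]
    constructor <;> linarith [this.1, this.2]
  -- key identity
  have hA : ∀ ε, 0 < ε → ∀ t : ℝ,
      I ε (2 * H ε * t) / H ε = ∫ τ in (0:ℝ)..t, M ε (2 * H ε * τ) := by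
    intro ε hε t
    have hHε := hH ε hε
    have h2H : (2 * H ε) ≠ 0 := by positivity
    rw [hI ε hε, intervalIntegral.integral_comp_mul_left (M ε) h2H, mul_zero,
      smul_eq_mul]
    field_simp
  -- convergence of J t for 0 < t ≤ 1
  have hJ : ∀ t : ℝ, 0 < t → t ≤ 1 →
      Tendsto (fun ε => ∫ τ in (0:ℝ)..t, M ε (2 * H ε * τ)) l (nhds t) := by
    intro t ht ht1
    have key : Tendsto (fun ε => ∫ τ in (0:ℝ)..t, M ε (2 * H ε * τ)) l
        (nhds (∫ _ in (0:ℝ)..t, (1:ℝ))) := by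
      apply intervalIntegral.tendsto_integral_filter_of_dominated_convergence
        (bound := fun _ => (1:ℝ))
      · filter_upwards [hev] with ε hε
        exact ((hmeas ε hε).comp (measurable_const_mul _)).aestronglyMeasurable
      · filter_upwards [hev] with ε hε
        refine .of_forall fun x hx => ?_
        rw [Set.uIoc_of_le ht.le] at hx
        have hHε := hH ε hε
        have h2 : (0:ℝ) ≤ 2 * H ε * x :=
          mul_nonneg (by positivity) hx.1.le
        have := hM01 ε hε _ h2
        simp only [Real.norm_eq_abs, abs_le]
        constructor <;> linarith [this.1, this.2]
      · exact intervalIntegrable_const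
      · have hne : (volume : Measure ℝ) {t} = 0 := measure_singleton t
        refine ae_iff.mpr (measure_mono_null (fun x hx => ?_) hne)
        simp only [Set.mem_setOf_eq, not_forall] at hx
        obtain ⟨hxI, hxn⟩ := hx
        rw [Set.uIoc_of_le ht.le] at hxI
        by_contra hxt
        have hx1 : ¬ x < 1 := fun h => hxn (hstep x ⟨hxI.1, h⟩)
        push_neg at hx1
        exact hxt (Set.mem_singleton_iff.mpr (le_antisymm hxI.2 (ht1.trans hx1)))
    simpa using key
  intro t ht
  rcases le_or_gt t 1 with ht1 | ht1
  · rw [min_eq_left ht1]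
    refine Tendsto.congr' ?_ (hJ t ht ht1)
    filter_upwards [hev] with ε hε
    exact (hA ε hε t).symm
  · rw [min_eq_right ht1.le]
    rw [Metric.tendsto_nhds]
    intro δ hδ
    set t' : ℝ := max (1 - δ/2) (1/2) with ht'
    have ht'0 : 0 < t' := lt_of_lt_of_le (by norm_num) (le_max_right _ _)
    have ht'1 : t' < 1 := by
      rw [ht']
      apply max_lt <;> [linarith; norm_num]
    have hlow : t' - δ/2 ≥ 1 - δ := by
      rcases le_total (1 - δ/2) (1/2) with h | h
      · have : t' = 1/2 := max_eq_right h
        rw [this]; linarith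
      · have : t' = 1 - δ/2 := max_eq_left h
        rw [this]; linarith
    have hJt' := hJ t' ht'0 ht'1.le
    rw [Metric.tendsto_nhds] at hJt'
    filter_upwards [hev, hJt' (δ/2) (by linarith)] with ε hε hJε
    have hHε := hH ε hε
    have h2Ht : 0 < 2 * H ε * t := by positivity
    have hup : I ε (2 * H ε * t) / H ε ≤ 1 :=
      (div_le_one hHε).mpr (hIH ε hε _ h2Ht)
    have hmono : (∫ τ in (0:ℝ)..t', M ε (2 * H ε * τ)) ≤
        ∫ τ in (0:ℝ)..t, M ε (2 * H ε * τ) := by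
      apply intervalIntegral.integral_mono_interval le_rfl ht'0.le (ht'1.le.trans ht1.le)
      · refine ae_restrict_of_forall_mem measurableSet_Ioc fun x hx => ?_
        have h2 : (0:ℝ) ≤ 2 * H ε * x := mul_nonneg (by positivity) hx.1.le
        exact (hM01 ε hε _ h2).1
      · exact hint ε hε t ht
    have hlowε : I ε (2 * H ε * t) / H ε > 1 - δ := by
      rw [hA ε hε t]
      rw [Real.dist_eq, abs_lt] at hJε
      calc (1:ℝ) - δ ≤ t' - δ/2 := hlow
        _ < ∫ τ in (0:ℝ)..t', M ε (2 * H ε * τ) := by linarith [hJε.1]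
        _ ≤ _ := hmono
    rw [Real.dist_eq, abs_lt]
    constructor <;> linarith
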